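/- Let ξ = (ξ^c, ξ^m) be a pair of ℤ_+-valued random variables with E(ξ^c + ξ^m) ≤ 1, and let (ξ^c_i, ξ^m_i) be i.i.d. copies. Let π^{*n}_{k,ℓ} = P(ξ^c_1+...+ξ^c_n = k, ξ^m_1+...+ξ^m_n = ℓ). Define Σ_j = Σ_{i≤j}(ξ^c_i + ξ^m_i) and let T = min{j ≥ 1 : Σ_j = j − 1} and A = 1 + ξ^m_1 + ... + ξ^m_T. Then for all 1 ≤ k ≤ n, P(T = n, A = k) = (1/n) · π^{*n}_{n−k, k−1}. -/

import Mathlib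

set_option autoImplicit false

open MeasureTheory ProbabilityTheory Filter Finset

section AuxGW

/-- partial sum of the rotated sequence, case without wrap-around -/
lemma rot_sum_low (x : ℕ → ℤ) (n r j : ℕ) (hjn : r + j ≤ n) :
    ∑ i ∈ range j, x ((i + r) % n) =
      (∑ i ∈ range (r + j), x i) - ∑ i ∈ range r, x i := by
  have h1 : ∑ i ∈ range j, x ((i + r) % n) = ∑ i ∈ range j, x (r + i) := by
    refine Finset.sum_congr rfl fun i hi => ?_
    have hi' := Finset.mem_range.mp hi
    rw [Nat.mod_eq_of_lt (by omega), Nat.add_comm]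
  have h2 : ∑ i ∈ Finset.Ico r (r + j), x i = ∑ i ∈ range j, x (r + i) := by
    rw [Finset.sum_Ico_eq_sum_range, Nat.add_sub_cancel_left]
  rw [h1, ← h2, ← Finset.sum_range_add_sum_Ico x (by omega : r ≤ r + j)]
  ring

/-- partial sum of the rotated sequence, case with wrap-around -/
lemma rot_sum_high (x : ℕ → ℤ) (n r j : ℕ) (hr : r < n) (hj : j ≤ n) (hn : n ≤ r + j) :
    ∑ i ∈ range j, x ((i + r) % n) =
      (∑ i ∈ range n, x i) - (∑ i ∈ range r, x i) + ∑ i ∈ range (r + j - n), x i := by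
  have hsplit : j = (n - r) + (r + j - n) := by omega
  rw [hsplit, Finset.sum_range_add]
  have h1 : ∑ i ∈ range (n - r), x ((i + r) % n) =
      (∑ i ∈ range n, x i) - ∑ i ∈ range r, x i := by
    have := rot_sum_low x n r (n - r) (by omega)
    rwa [show r + (n - r) = n by omega] at this
  have h2 : ∀ i ∈ range (r + j - n), x ((n - r + i + r) % n) = x i := by
    intro i hi
    have hi' := Finset.mem_range.mp hi
    have : (n - r + i + r) % n = i := by
      rw [show n - r + i + r = i + n by omega, Nat.add_mod_right, Nat.mod_eq_of_lt (by omega)]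
    rw [this]
  rw [h1, Finset.sum_congr rfl h2, show r + (n - r + (r + j - n)) - n = r + j - n by omega]

def goodRot (x : ℕ → ℤ) (n r : ℕ) : Prop :=
  ∀ j, 1 ≤ j → j < n → 0 ≤ ∑ i ∈ range j, x ((i + r) % n)

lemma goodRot_iff (x : ℕ → ℤ) (n r : ℕ) (hr : r < n)
    (hsum : ∑ i ∈ range n, x i = -1) :
    goodRot x n r ↔
      (∀ t, r < t → t < n → ∑ i ∈ range r, x i ≤ ∑ i ∈ range t, x i) ∧
      (∀ t, t < r → (∑ i ∈ range r, x i) + 1 ≤ ∑ i ∈ range t, x i) := by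
  constructor
  · intro hg
    constructor
    · intro t hrt htn
      have h := hg (t - r) (by omega) (by omega)
      rw [rot_sum_low x n r (t - r) (by omega), show r + (t - r) = t by omega] at h
      linarith
    · intro t htr
      have h := hg (t + n - r) (by omega) (by omega)
      rw [rot_sum_high x n r (t + n - r) hr (by omega) (by omega), hsum,
        show r + (t + n - r) - n = t by omega] at h
      linarith
  · rintro ⟨h1, h2⟩ j hj1 hjn
    rcases le_or_gt (r + j) n with hc | hc
    · rw [rot_sum_low x n r j hc]
      rcases eq_or_lt_of_le hc with hc' | hc'
      · rw [hc', hsum]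
        have := h2 0 (by omega)
        simp only [Finset.range_zero, Finset.sum_empty] at this
        linarith
      · have := h1 (r + j) (by omega) hc'
        linarith
    · rw [rot_sum_high x n r j hr (by omega) (by omega), hsum]
      have := h2 (r + j - n) (by omega)
      linarith

lemma existsUnique_goodRot (x : ℕ → ℤ) (n : ℕ) (hn : 1 ≤ n)
    (hsum : ∑ i ∈ range n, x i = -1) :
    ∃! r, r < n ∧ goodRot x n r := by
  obtain ⟨m, hmmem, hmmin⟩ := Finset.exists_min_image (range n)
    (fun t => ∑ i ∈ range t, x i) ⟨0, Finset.mem_range.mpr (by omega)⟩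
  set Sset : Set ℕ := {t | t < n ∧ ∀ s, s < n → ∑ i ∈ range t, x i ≤ ∑ i ∈ range s, x i}
    with hSset
  have hne : Sset.Nonempty := ⟨m, Finset.mem_range.mp hmmem,
    fun s hs => hmmin s (Finset.mem_range.mpr hs)⟩
  set r := sInf Sset with hrdef
  have hrmem : r ∈ Sset := Nat.sInf_mem hne
  have hrn : r < n := hrmem.1
  have hgood : goodRot x n r := by
    refine (goodRot_iff x n r hrn hsum).mpr ⟨fun t hrt htn => hrmem.2 t htn, ?_⟩
    intro t htr
    have htnot : t ∉ Sset := Nat.notMem_of_lt_sInf htr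
    have : ¬ (∀ s, s < n → ∑ i ∈ range t, x i ≤ ∑ i ∈ range s, x i) := by
      intro hall; exact htnot ⟨by omega, hall⟩
    push_neg at this
    obtain ⟨s, hsn, hs⟩ := this
    have := hrmem.2 s hsn
    omega
  refine ⟨r, ⟨hrn, hgood⟩, ?_⟩
  rintro r' ⟨hr'n, hg'⟩
  by_contra hne'
  rcases lt_or_gt_of_ne hne' with h | h
  · have ha := ((goodRot_iff x n r' hr'n hsum).mp hg').1 r h hrn
    have hb := ((goodRot_iff x n r hrn hsum).mp hgood).2 r' h
    omega
  · have ha := ((goodRot_iff x n r hrn hsum).mp hgood).1 r' h hr'n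
    have hb := ((goodRot_iff x n r' hr'n hsum).mp hg').2 r h
    omega

lemma law_piece {Ω : Type*} [MeasureSpace Ω] (P : Measure Ω) [IsProbabilityMeasure P]
    (ξ : ℕ → Ω → ℕ × ℕ) (hmeas : ∀ i, Measurable (ξ i))
    (hindep : iIndepFun ξ P)
    (hident : ∀ i, IdentDistrib (ξ i) (ξ 0) P P)
    (n : ℕ) (e : Fin n → ℕ) (he : Function.Injective e)
    (B : Set (Fin n → ℕ × ℕ)) :
    P ((fun ω (i : Fin n) => ξ (e i) ω) ⁻¹' B)
      = ∑' v : B, ∏ i : Fin n, P (ξ 0 ⁻¹' {(v : Fin n → ℕ × ℕ) i}) := by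
  classical
  set V : Ω → (Fin n → ℕ × ℕ) := fun ω i => ξ (e i) ω with hV
  have hVmeas : Measurable V := measurable_pi_lambda _ fun i => hmeas (e i)
  have hident' : ∀ m a, P (ξ m ⁻¹' {a}) = P (ξ 0 ⁻¹' {a}) := by
    intro m a
    rw [← Measure.map_apply (hmeas m) (measurableSet_singleton a),
      ← Measure.map_apply (hmeas 0) (measurableSet_singleton a), (hident m).map_eq]
  have hsingle : ∀ v : Fin n → ℕ × ℕ,
      P (V ⁻¹' {v}) = ∏ i : Fin n, P (ξ 0 ⁻¹' {v i}) := by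
    intro v
    set u : ℕ → Set (ℕ × ℕ) :=
      fun j => if h : ∃ i, e i = j then {v h.choose} else Set.univ with hu
    have hue : ∀ i : Fin n, u (e i) = {v i} := by
      intro i
      have h : ∃ i', e i' = e i := ⟨i, rfl⟩
      simp only [hu, dif_pos h]
      exact congrArg (fun w => ({w} : Set (ℕ × ℕ))) (congrArg v (he h.choose_spec))
    have hmeasu : ∀ j, j ∈ Finset.image e Finset.univ → MeasurableSet (u j) := by
      intro j _
      by_cases h : ∃ i, e i = j
      · simp only [hu, dif_pos h]; exact measurableSet_singleton _
      · simp only [hu, dif_neg h]; exact MeasurableSet.univ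
    have key := hindep.measure_inter_preimage_eq_mul (Finset.image e Finset.univ) hmeasu
    have hInter : (⋂ j ∈ Finset.image e Finset.univ, ξ j ⁻¹' u j) = V ⁻¹' {v} := by
      ext ω
      simp only [Set.mem_iInter, Finset.mem_image, Finset.mem_univ, true_and,
        Set.mem_preimage, Set.mem_singleton_iff, hV]
      constructor
      · intro h
        funext i
        have := h (e i) ⟨i, rfl⟩
        rwa [hue i, Set.mem_singleton_iff] at this
      · rintro h j ⟨i, rfl⟩
        rw [hue i, Set.mem_singleton_iff]
        exact congrFun h i
    have hProd : ∏ j ∈ Finset.image e Finset.univ, P (ξ j ⁻¹' u j)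
        = ∏ i : Fin n, P (ξ 0 ⁻¹' {v i}) := by
      rw [Finset.prod_image (fun a _ b _ h => he h)]
      exact Finset.prod_congr rfl fun i _ => by rw [hue i, hident' (e i)]
    rw [← hInter, key, hProd]
  have hBc : B.Countable := Set.to_countable B
  have hdecomp : V ⁻¹' B = ⋃ v ∈ B, V ⁻¹' {v} := by
    ext ω; simp
  rw [hdecomp, measure_biUnion hBc
      (fun a _ b _ hab => Set.disjoint_iff.mpr fun ω hω => by
        exact hab (hω.1.symm.trans hω.2))
      (fun v _ => hVmeas (measurableSet_singleton v))]
  exact tsum_congr fun v => hsingle v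


/-- Joint law of the size of a Galton–Watson tree with neutral mutations and of its
number of alleles: `P(T = n, A = k) = (1/n) π^{*n}_{n-k, k-1}`, where `T` is the first
time the total-offspring walk hits `-1` (the total size of the tree of one ancestor) and
`A = 1 + (number of mutant children born before time T)` is the number of alleles. -/
theorem size_and_number_of_alleles
    {Ω : Type*} [MeasureSpace Ω] (P : Measure Ω := volume) [IsProbabilityMeasure P]
    (ξ : ℕ → Ω → ℕ × ℕ) (hmeas : ∀ i, Measurable (ξ i))
    (hindep : iIndepFun ξ P)
    (hident : ∀ i, IdentDistrib (ξ i) (ξ 0) P P)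
    (hint : Integrable (fun ω => (((ξ 0 ω).1 : ℝ) + ((ξ 0 ω).2 : ℝ))) P)
    (hmean : (∫ ω, (((ξ 0 ω).1 : ℝ) + ((ξ 0 ω).2 : ℝ)) ∂P) ≤ 1)
    (T : Ω → ℕ)
    (hT : ∀ ω, T ω = sInf {j : ℕ | 1 ≤ j ∧
      (∑ i ∈ Finset.range j, (((ξ i ω).1 : ℤ) + ((ξ i ω).2 : ℤ))) = (j : ℤ) - 1})
    (A : Ω → ℕ)
    (hA : ∀ ω, A ω = 1 + ∑ i ∈ Finset.range (T ω), (ξ i ω).2)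
    (n k : ℕ) (hk1 : 1 ≤ k) (hkn : k ≤ n) :
    P {ω | T ω = n ∧ A ω = k}
      = (n : ENNReal)⁻¹ *
        P {ω | (∑ i ∈ Finset.range n, (ξ i ω).1) = n - k
             ∧ (∑ i ∈ Finset.range n, (ξ i ω).2) = k - 1} := by
  classical
  have hn0 : 0 < n := lt_of_lt_of_le hk1 hkn
  haveI : NeZero n := ⟨by omega⟩
  set x : Ω → ℕ → ℤ := fun ω i => ((ξ i ω).1 : ℤ) + ((ξ i ω).2 : ℤ) - 1 with hx
  set F : Set Ω := {ω | (∑ i ∈ Finset.range n, (ξ i ω).1) = n - k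
       ∧ (∑ i ∈ Finset.range n, (ξ i ω).2) = k - 1} with hF
  have hSx : ∀ (ω : Ω) (j : ℕ), ∑ i ∈ range j, x ω i
      = (∑ i ∈ range j, (((ξ i ω).1 : ℤ) + ((ξ i ω).2 : ℤ))) - j := by
    intro ω j
    simp [hx, Finset.sum_sub_distrib]
  have hsplit : ∀ ω : Ω, (∑ i ∈ range n, (((ξ i ω).1 : ℤ) + ((ξ i ω).2 : ℤ)))
      = ((∑ i ∈ range n, (ξ i ω).1 : ℕ) : ℤ) + ((∑ i ∈ range n, (ξ i ω).2 : ℕ) : ℤ) := by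
    intro ω
    push_cast
    rw [← Finset.sum_add_distrib]
  have hFsum : ∀ ω ∈ F, ∑ i ∈ range n, x ω i = -1 := by
    intro ω hω
    have h1 := hω.1
    have h2 := hω.2
    rw [hSx, hsplit, h1, h2]
    omega
  have hstepsum : ∀ (ω : Ω) (j : ℕ),
      ((∑ i ∈ range j, (((ξ i ω).1 : ℤ) + ((ξ i ω).2 : ℤ))) = (j : ℤ) - 1)
      ↔ ∑ i ∈ range j, x ω i = -1 := by
    intro ω j
    rw [hSx]
    omega
  have hg0 : ∀ (ω : Ω) (j : ℕ), j < n →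
      ∑ i ∈ range j, x ω ((i + 0) % n) = ∑ i ∈ range j, x ω i := by
    intro ω j hj
    refine Finset.sum_congr rfl fun i hi => ?_
    have hi' := Finset.mem_range.mp hi
    rw [Nat.add_zero, Nat.mod_eq_of_lt (by omega)]
  set E : ℕ → Set Ω := fun r => {ω | ω ∈ F ∧ goodRot (x ω) n r} with hE
  -- Claim 1 : the event is E 0
  have claim1 : {ω | T ω = n ∧ A ω = k} = E 0 := by
    ext ω
    set s : Set ℕ := {j : ℕ | 1 ≤ j ∧
      (∑ i ∈ Finset.range j, (((ξ i ω).1 : ℤ) + ((ξ i ω).2 : ℤ))) = (j : ℤ) - 1} with hs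
    have hTs : T ω = sInf s := hT ω
    simp only [Set.mem_setOf_eq, hE]
    constructor
    · rintro ⟨hTn, hAk⟩
      have hsInf : sInf s = n := hTs ▸ hTn
      have hne : s.Nonempty := by
        by_contra h
        rw [Set.not_nonempty_iff_eq_empty] at h
        rw [h, Nat.sInf_empty] at hsInf
        omega
      have hmem : n ∈ s := hsInf ▸ Nat.sInf_mem hne
      have hnotmem : ∀ j, j < n → j ∉ s := fun j hj =>
        Nat.notMem_of_lt_sInf (hsInf ▸ hj)
      have hSn : ∑ i ∈ range n, x ω i = -1 := (hstepsum ω n).mp hmem.2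
      have hkey : ∀ j, j < n → 0 ≤ ∑ i ∈ range j, x ω i := by
        intro j
        induction j with
        | zero => intro _; simp
        | succ p ih =>
          intro hp
          have h1 := ih (by omega)
          have hstep : (-1 : ℤ) ≤ x ω p := by
            have ha : (0 : ℤ) ≤ ((ξ p ω).1 : ℤ) := Int.natCast_nonneg _
            have hb : (0 : ℤ) ≤ ((ξ p ω).2 : ℤ) := Int.natCast_nonneg _
            simp only [hx]
            omega
          have hne' : ∑ i ∈ range (p + 1), x ω i ≠ -1 := by
            intro hc
            exact hnotmem (p + 1) hp ⟨by omega, (hstepsum ω (p + 1)).mpr hc⟩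
          have hsucc := Finset.sum_range_succ (x ω) p
          omega
      have hgood : goodRot (x ω) n 0 := by
        intro j hj1 hjn
        rw [hg0 ω j hjn]
        exact hkey j hjn
      have hAv := hA ω
      rw [hTn] at hAv
      have hm : ∑ i ∈ range n, (ξ i ω).2 = k - 1 := by omega
      have hc : ∑ i ∈ range n, (ξ i ω).1 = n - k := by
        have h1 := hmem.2
        rw [hsplit] at h1
        omega
      exact ⟨⟨hc, hm⟩, hgood⟩
    · rintro ⟨⟨hc, hm⟩, hgood⟩
      have hSn : ∑ i ∈ range n, x ω i = -1 := hFsum ω ⟨hc, hm⟩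
      have hmem : n ∈ s := ⟨by omega, (hstepsum ω n).mpr hSn⟩
      have hnot : ∀ j, j < n → j ∉ s := by
        intro j hj hjmem
        have hj1 : 1 ≤ j := hjmem.1
        have hx' := (hstepsum ω j).mp hjmem.2
        have hgj := hgood j hj1 hj
        rw [hg0 ω j hj] at hgj
        omega
      have hTn : T ω = n := by
        rw [hTs]
        refine le_antisymm (Nat.sInf_le hmem) ?_
        by_contra h
        push_neg at h
        exact hnot _ h (Nat.sInf_mem ⟨n, hmem⟩)
      refine ⟨hTn, ?_⟩
      have hAv := hA ω
      rw [hTn] at hAv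
      rw [hAv, hm]
      omega
  -- permutation-invariance of full sums
  have hperm : ∀ {M : Type} [AddCommMonoid M] (f : ℕ → M) (r : ℕ),
      ∑ i : Fin n, f ((i.val + r) % n) = ∑ i ∈ range n, f i := by
    intro M _ f r
    rw [← Fin.sum_univ_eq_sum_range]
    open Fin.NatCast in
    refine Fintype.sum_equiv (Equiv.addRight ((r : ℕ) : Fin n)) _ _ fun i => ?_
    congr 1
    open Fin.NatCast in
    show (i.val + r) % n = ((i + ((r : ℕ) : Fin n)) : Fin n).val
    rw [Fin.add_def, Fin.val_natCast]
    exact ((Nat.mod_modEq r n).add_left i.val).symm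
  -- the set B of good configurations
  set B : Set (Fin n → ℕ × ℕ) := {v | (∑ i : Fin n, (v i).1) = n - k
      ∧ (∑ i : Fin n, (v i).2) = k - 1
      ∧ ∀ j, 1 ≤ j → j < n → 0 ≤ ∑ i ∈ range j,
          (((v ⟨i % n, Nat.mod_lt i hn0⟩).1 : ℤ) + ((v ⟨i % n, Nat.mod_lt i hn0⟩).2 : ℤ) - 1)}
    with hB
  have hgr : ∀ (ω : Ω) (r j : ℕ), j < n →
      (∑ i ∈ range j, (((ξ ((i % n + r) % n) ω).1 : ℤ) + ((ξ ((i % n + r) % n) ω).2 : ℤ) - 1))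
        = ∑ i ∈ range j, x ω ((i + r) % n) := by
    intro ω r j hj
    refine Finset.sum_congr rfl fun i hi => ?_
    have hi' := Finset.mem_range.mp hi
    rw [Nat.mod_eq_of_lt (show i < n by omega)]
  have hpre : ∀ r, E r = (fun ω (i : Fin n) => ξ ((i.val + r) % n) ω) ⁻¹' B := by
    intro r
    ext ω
    simp only [hE, hB, hF, Set.mem_setOf_eq, Set.mem_preimage]
    rw [hperm (fun t => (ξ t ω).1) r, hperm (fun t => (ξ t ω).2) r]
    constructor
    · rintro ⟨⟨h1, h2⟩, hg⟩
      exact ⟨h1, h2, fun j hj1 hjn => by rw [hgr ω r j hjn]; exact hg j hj1 hjn⟩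
    · rintro ⟨h1, h2, hg⟩
      exact ⟨⟨h1, h2⟩, fun j hj1 hjn => by
        have := hg j hj1 hjn
        rwa [hgr ω r j hjn] at this⟩
  have hinj : ∀ r, Function.Injective (fun i : Fin n => (i.val + r) % n) := by
    intro r a b hab
    simp only at hab
    have h2 : a.val % n = b.val % n := Nat.ModEq.add_right_cancel' r hab
    exact Fin.ext (by rwa [Nat.mod_eq_of_lt a.isLt, Nat.mod_eq_of_lt b.isLt] at h2)
  have hmeasE : ∀ r, P (E r)
      = ∑' v : B, ∏ i : Fin n, P (ξ 0 ⁻¹' {(v : Fin n → ℕ × ℕ) i}) := by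
    intro r
    rw [hpre r]
    exact law_piece P ξ hmeas hindep hident n _ (hinj r) B
  -- B is measurable
  haveI hsc : MeasurableSingletonClass (Fin n → ℕ × ℕ) := ⟨fun v => by
    have hv : {v} = ⋂ i : Fin n, (fun w : Fin n → ℕ × ℕ => w i) ⁻¹' {v i} := by
      ext w
      simp [funext_iff, Set.mem_iInter]
    rw [hv]
    exact MeasurableSet.iInter fun i => (measurable_pi_apply i) (measurableSet_singleton _)⟩
  have hmeasSet : ∀ r, MeasurableSet (E r) := by
    intro r
    rw [hpre r]
    exact (measurable_pi_lambda _ fun i => hmeas _) (Set.to_countable B).measurableSet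
  -- F is the disjoint union of the E r
  have hcover : F = ⋃ r ∈ Finset.range n, E r := by
    ext ω
    simp only [Set.mem_iUnion, hE, Set.mem_setOf_eq, Finset.mem_range, exists_prop]
    constructor
    · intro hω
      obtain ⟨r, ⟨hrn, hg⟩, -⟩ := existsUnique_goodRot (x ω) n (by omega) (hFsum ω hω)
      exact ⟨r, hrn, hω, hg⟩
    · rintro ⟨r, hrn, hω, hg⟩
      exact hω
  have hPF : P F = ∑ r ∈ Finset.range n, P (E r) := by
    rw [hcover]
    refine measure_biUnion_finset ?_ fun r _ => hmeasSet r
    intro a ha b hb hab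
    rw [Finset.mem_coe, Finset.mem_range] at ha hb
    refine Set.disjoint_left.mpr fun ω hωa hωb => ?_
    have h := existsUnique_goodRot (x ω) n (by omega) (hFsum ω hωa.1)
    exact hab (h.unique ⟨ha, hωa.2⟩ ⟨hb, hωb.2⟩)
  have hconst : ∀ r, P (E r) = P (E 0) := fun r => (hmeasE r).trans (hmeasE 0).symm
  have hPF' : P F = n * P (E 0) := by
    rw [hPF, Finset.sum_congr rfl fun r _ => hconst r, Finset.sum_const,
      Finset.card_range, nsmul_eq_mul]
  rw [claim1, hPF', ← mul_assoc,
    ENNReal.inv_mul_cancel (by exact_mod_cast (show (n : ℕ) ≠ 0 by omega))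
      (ENNReal.natCast_ne_top n), one_mul]
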